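/- Let (S,*,n) be a two-dimensional symmetric composition algebra over a field k containing an element x with n(x) = 0 and α := n(x, x*x) ≠ 0 (so that {x, x*x} is a basis of S). Then S contains a nonzero idempotent (an element e ≠ 0 with e*e = e) if and only if there exists ε ∈ k with ε³ = α. -/

import Mathlib

open QuadraticMap

/-- a two-dimensional symmetric composition algebra containing an
element `x` with `n(x) = 0` and `α := n(x, x*x) ≠ 0` has a nonzero idempotent
if and only if `α` is a cube in `k`. -/
theorem two_dim_symmetric_composition_idempotent_iff_cube
    {k : Type*} [Field k] {S : Type*} [AddCommGroup S] [Module k S]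
    (mul : S →ₗ[k] S →ₗ[k] S) (n : QuadraticForm k S)
    (hnondeg : ∀ x : S, (∀ y : S, polar n x y = 0) → x = 0)
    (hcomp : ∀ x y : S, n (mul x y) = n x * n y)
    (hassoc : ∀ x y z : S, polar n (mul x y) z = polar n x (mul y z))
    (hdim : Module.finrank k S = 2)
    (x : S) (hx : n x = 0) (hα : polar n x (mul x x) ≠ 0) :
    (∃ e : S, e ≠ 0 ∧ mul e e = e) ↔ ∃ ε : k, ε ^ 3 = polar n x (mul x x) := by
  set y : S := mul x x with hy
  set α : k := polar n x y with hαdef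
  -- polarized composition identities
  have L1 : ∀ u v w : S, polar n (mul u v) (mul u w) = n u * polar n v w := by
    intro u v w
    have h : mul u v + mul u w = mul u (v + w) := (map_add (mul u) v w).symm
    simp only [QuadraticMap.polar]
    rw [h, hcomp, hcomp, hcomp]
    ring
  have L2 : ∀ u v w : S, polar n (mul u w) (mul v w) = polar n u v * n w := by
    intro u v w
    have h : mul u w + mul v w = mul (u + v) w := by
      rw [map_add, LinearMap.add_apply]
    simp only [QuadraticMap.polar]
    rw [h, hcomp, hcomp, hcomp]
    ring
  have L3 : ∀ u v : S, mul (mul u v) u = n u • v := by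
    intro u v
    apply eq_of_sub_eq_zero
    apply hnondeg
    intro z
    rw [polar_sub_left, hassoc, L1, polar_smul_left, smul_eq_mul, sub_self]
  have L4 : ∀ u v : S, mul u (mul v u) = n u • v := by
    intro u v
    apply eq_of_sub_eq_zero
    apply hnondeg
    intro z
    rw [polar_sub_left, polar_comm n (mul u (mul v u)) z, ← hassoc, L2,
      polar_smul_left, smul_eq_mul, polar_comm n v z]
    ring
  have hxy : mul x y = 0 := by
    have := L4 x x
    rwa [hx, zero_smul, ← hy] at this
  have hyx : mul y x = 0 := by
    have := L3 x x
    rwa [hx, zero_smul, ← hy] at this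
  have hny : n y = 0 := by rw [hy, hcomp, hx, zero_mul]
  have hpxx : polar n x x = 0 := by rw [polar_self, hx, smul_zero]
  have hpyy : polar n y y = 0 := by rw [polar_self, hny, smul_zero]
  have hpyx : polar n y x = α := polar_comm n y x
  -- mixed identity
  have L5 : ∀ u v w z : S,
      polar n (mul u v) (mul w z) + polar n (mul w v) (mul u z)
        = polar n u w * polar n v z := by
    intro u v w z
    have h := L1 (u + w) v z
    have e1 : mul (u + w) v = mul u v + mul w v := by
      rw [map_add, LinearMap.add_apply]
    have e2 : mul (u + w) z = mul u z + mul w z := by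
      rw [map_add, LinearMap.add_apply]
    have e3 : n (u + w) = polar n u w + n u + n w := by
      simp [QuadraticMap.polar]; ring
    rw [e1, e2, e3] at h
    simp only [polar_add_left, polar_add_right, L1] at h
    linear_combination h
  -- independence helper
  have hind : ∀ a b : k, a • x + b • y = 0 → a = 0 ∧ b = 0 := by
    intro a b hab
    have h1 : polar n (a • x + b • y) x = 0 := by rw [hab, polar_zero_left]
    have h2 : polar n (a • x + b • y) y = 0 := by rw [hab, polar_zero_left]
    rw [polar_add_left, polar_smul_left, polar_smul_left, hpxx, hpyx,
      smul_zero, zero_add, smul_eq_mul] at h1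
    rw [polar_add_left, polar_smul_left, polar_smul_left, hpyy, ← hαdef,
      smul_zero, add_zero, smul_eq_mul] at h2
    exact ⟨(mul_eq_zero.1 h2).resolve_right hα, (mul_eq_zero.1 h1).resolve_right hα⟩
  -- basis / spanning
  have li : LinearIndependent k ![x, y] := by
    rw [LinearIndependent.pair_iff]
    intro a b hab
    exact hind a b hab
  have hcard : Fintype.card (Fin 2) = Module.finrank k S := by simp [hdim]
  let B := basisOfLinearIndependentOfCardEqFinrank li hcard
  have hB0 : B 0 = x := by
    rw [coe_basisOfLinearIndependentOfCardEqFinrank]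
    rfl
  have hB1 : B 1 = y := by
    rw [coe_basisOfLinearIndependentOfCardEqFinrank]
    rfl
  have hspan : ∀ z : S, ∃ c d : k, z = c • x + d • y := by
    intro z
    refine ⟨B.repr z 0, B.repr z 1, ?_⟩
    have := B.sum_repr z
    rw [Fin.sum_univ_two, hB0, hB1] at this
    exact this.symm
  -- y * y = α • x
  have hyy : mul y y = α • x := by
    apply eq_of_sub_eq_zero
    apply hnondeg
    intro z
    obtain ⟨c, d, rfl⟩ := hspan z
    have hx0 : polar n (mul y y) x = 0 := by
      rw [hassoc, hyx, polar_zero_right]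
    have hy0 : polar n (mul y y) y = α * α := by
      have h := L5 y y x x
      rw [hxy, hyx, polar_zero_left, add_zero, hpyx, ← hy] at h
      exact h
    rw [polar_sub_left, polar_add_right, polar_add_right, polar_smul_right,
      polar_smul_right, polar_smul_right, polar_smul_right, hx0, hy0,
      polar_smul_left, polar_smul_left, hpxx]
    simp only [polar_comm n x y, hpyx, smul_eq_mul, mul_zero, smul_zero]
    ring
  -- square formula
  have hsq : ∀ s t : k, mul (s • x + t • y) (s • x + t • y)
      = (t * t * α) • x + (s * s) • y := by
    intro s t
    have : mul (s • x + t • y) (s • x + t • y)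
        = (s * s) • mul x x + (s * t) • mul x y + (t * s) • mul y x
          + (t * t) • mul y y := by
      simp only [map_add, LinearMap.map_smul, LinearMap.add_apply,
        LinearMap.smul_apply, smul_add, smul_smul]
      abel
    rw [this, hxy, hyx, hyy, smul_zero, smul_zero, add_zero, add_zero, ← hy,
      smul_smul]
    ring_nf
    abel
  constructor
  · rintro ⟨e, he0, hee⟩
    obtain ⟨s, t, rfl⟩ := hspan e
    rw [hsq] at hee
    have hco : (t * t * α - s) • x + (s * s - t) • y = 0 := by
      rw [sub_smul, sub_smul]
      rw [← sub_eq_zero] at hee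
      calc (t * t * α) • x - s • x + ((s * s) • y - t • y)
          = (t * t * α) • x + (s * s) • y - (s • x + t • y) := by abel
        _ = 0 := hee
    obtain ⟨h1, h2⟩ := hind _ _ hco
    have hs : s = t * t * α := (sub_eq_zero.1 h1).symm
    have ht : t = s * s := (sub_eq_zero.1 h2).symm
    have htne : t ≠ 0 := by
      intro h0
      apply he0
      have : s = 0 := by rw [hs, h0]; ring
      rw [this, h0, zero_smul, zero_smul, add_zero]
    refine ⟨t * α, ?_⟩
    have key : t * (t * t * t * (α * α) - 1) = 0 := by
      have h4 : t = (t * t * α) * (t * t * α) := by rw [← hs, ← ht]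
      linear_combination -h4
    have h3 : t * t * t * (α * α) = 1 := by
      rcases mul_eq_zero.1 key with h | h
      · exact absurd h htne
      · linear_combination h
    calc (t * α) ^ 3 = (t * t * t * (α * α)) * α := by ring
      _ = α := by rw [h3, one_mul]
  · rintro ⟨ε, hε⟩
    have hεne : ε ≠ 0 := by
      intro h
      apply hα
      rw [← hε, h]
      ring
    refine ⟨ε⁻¹ • x + (ε⁻¹ * ε⁻¹) • y, ?_, ?_⟩
    · intro h0
      obtain ⟨h1, _⟩ := hind _ _ h0
      exact hεne (by simpa using h1)
    · rw [hsq]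
      have hc : (ε⁻¹ * ε⁻¹) * (ε⁻¹ * ε⁻¹) * α = ε⁻¹ := by
        rw [← hε]
        field_simp
      rw [hc]
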